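/- Let L = L_{-2} ⊕ L_{-1} ⊕ L_0 ⊕ L_1 ⊕ L_2 be a 5-graded Lie algebra over a field of characteristic not 2 or 3 with L_0 = [L_1, L_{-1}]. Suppose I is a subspace of L such that for every l ∈ L_i with i ≠ 0, the map exp(ad l) is a well-defined Lie algebra endomorphism and exp(ad l)(I) ⊆ I. Then I is an ideal of L. -/

import Mathlib

/-- The truncated exponential of `ad l`, a finite sum since `ad l` is nilpotent
of index at most 5 for homogeneous elements of nonzero degree in a 5-graded
Lie algebra. -/
noncomputable def expAd (k : Type*) (L : Type*) [Field k] [LieRing L] [LieAlgebra k L]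
    (l : L) : Module.End k L :=
  ∑ n ∈ Finset.range 5, (n.factorial : k)⁻¹ • (LieAlgebra.ad k L l) ^ n

lemma homog_bracket_mem (k : Type*) [Field k] (L : Type*) [LieRing L] [LieAlgebra k L]
    (h2 : (2 : k) ≠ 0) (h3 : (3 : k) ≠ 0)
    (G : ℤ → Submodule k L) (I : Submodule k L)
    (hexp_inv : ∀ i : ℤ, i ≠ 0 → ∀ l ∈ G i, ∀ x ∈ I, expAd k L l x ∈ I)
    (i : ℤ) (hi : i ≠ 0) (l : L) (hl : l ∈ G i) (x : L) (hx : x ∈ I) :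
    ⁅l, x⁆ ∈ I := by
  set b : ℕ → L := fun n => (n.factorial : k)⁻¹ • ((LieAlgebra.ad k L l) ^ n) x with hb
  have hS : ∀ t : k, expAd k L (t • l) x = ∑ n ∈ Finset.range 5, t ^ n • b n := by
    intro t
    simp only [expAd, LinearMap.map_smul, smul_pow, LinearMap.sum_apply,
      LinearMap.smul_apply, hb]
    refine Finset.sum_congr rfl fun n _ => ?_
    rw [map_smul, smul_pow, LinearMap.smul_apply, smul_comm]
  have hmem : ∀ t : k, (∑ n ∈ Finset.range 5, t ^ n • b n) ∈ I := by
    intro t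
    rw [← hS]
    exact hexp_inv i hi (t • l) (Submodule.smul_mem _ t hl) x hx
  have hb1 : b 1 = ⁅l, x⁆ := by simp [hb]
  have hkey : (12 : k) • ⁅l, x⁆ =
      (-25 : k) • (∑ n ∈ Finset.range 5, (0:k) ^ n • b n)
      + (48 : k) • (∑ n ∈ Finset.range 5, (1:k) ^ n • b n)
      + (-36 : k) • (∑ n ∈ Finset.range 5, (2:k) ^ n • b n)
      + (16 : k) • (∑ n ∈ Finset.range 5, (3:k) ^ n • b n)
      + (-3 : k) • (∑ n ∈ Finset.range 5, (4:k) ^ n • b n) := by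
    rw [← hb1]
    simp only [Finset.sum_range_succ, Finset.sum_range_zero]
    module
  have h12 : (12 : k) ≠ 0 := by
    have : ((2:k) * 2) * 3 ≠ 0 := mul_ne_zero (mul_ne_zero h2 h2) h3
    convert this using 2
    norm_num
  have hmem12 : (12 : k) • ⁅l, x⁆ ∈ I := by
    rw [hkey]
    exact add_mem (add_mem (add_mem (add_mem (Submodule.smul_mem _ _ (hmem 0))
      (Submodule.smul_mem _ _ (hmem 1))) (Submodule.smul_mem _ _ (hmem 2)))
      (Submodule.smul_mem _ _ (hmem 3))) (Submodule.smul_mem _ _ (hmem 4))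
  have := Submodule.smul_mem I (12 : k)⁻¹ hmem12
  rwa [inv_smul_smul₀ h12] at this

/-- Let `L = L₋₂ ⊕ L₋₁ ⊕ L₀ ⊕ L₁ ⊕ L₂` be a 5-graded Lie algebra over a field of
characteristic not 2 or 3 with `L₀ = [L₁, L₋₁]`.  Suppose `I` is a subspace of `L`
such that for every `l ∈ Lᵢ` with `i ≠ 0`, `exp(ad l)` is a well-defined Lie algebra
endomorphism and `exp(ad l)(I) ⊆ I`.  Then `I` is an ideal of `L`. -/
theorem statement0 (k : Type*) [Field k] (L : Type*) [LieRing L] [LieAlgebra k L]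
    (h2 : (2 : k) ≠ 0) (h3 : (3 : k) ≠ 0)
    (G : ℤ → Submodule k L)
    (hdecomp : DirectSum.IsInternal G)
    (hbounded : ∀ i : ℤ, 2 < |i| → G i = ⊥)
    (hbracket : ∀ i j : ℤ, ∀ x ∈ G i, ∀ y ∈ G j, ⁅x, y⁆ ∈ G (i + j))
    (hgen0 : G 0 ≤ Submodule.span k
      {z : L | ∃ x ∈ G 1, ∃ y ∈ G (-1 : ℤ), z = ⁅x, y⁆})
    (I : Submodule k L)
    (hexp_hom : ∀ i : ℤ, i ≠ 0 → ∀ l ∈ G i, ∀ x y : L,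
      expAd k L l ⁅x, y⁆ = ⁅expAd k L l x, expAd k L l y⁆)
    (hexp_inv : ∀ i : ℤ, i ≠ 0 → ∀ l ∈ G i, ∀ x ∈ I, expAd k L l x ∈ I) :
    ∀ y : L, ∀ x ∈ I, ⁅y, x⁆ ∈ I := by
  have hA : ∀ i : ℤ, i ≠ 0 → ∀ l ∈ G i, ∀ x ∈ I, ⁅l, x⁆ ∈ I :=
    fun i hi l hl x hx => homog_bracket_mem k L h2 h3 G I hexp_inv i hi l hl x hx
  have hB : ∀ l ∈ G 0, ∀ x ∈ I, ⁅l, x⁆ ∈ I := by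
    intro l hl
    refine Submodule.span_induction ?_ ?_ ?_ ?_ (hgen0 hl)
    · rintro z ⟨a, ha, b, hb, rfl⟩ x hx
      rw [lie_lie]
      exact sub_mem (hA 1 one_ne_zero a ha _ (hA (-1) (by norm_num) b hb x hx))
        (hA (-1) (by norm_num) b hb _ (hA 1 one_ne_zero a ha x hx))
    · intro x _; simp
    · intro u v _ _ hu hv x hx
      rw [add_lie]
      exact add_mem (hu x hx) (hv x hx)
    · intro c u _ hu x hx
      rw [smul_lie]
      exact Submodule.smul_mem _ _ (hu x hx)
  intro y x hx
  have hy : y ∈ ⨆ i, G i := by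
    rw [hdecomp.submodule_iSup_eq_top]; trivial
  refine Submodule.iSup_induction (motive := fun z => ⁅z, x⁆ ∈ I) G hy ?_ (by simp) ?_
  · intro i l hl
    by_cases hi : i = 0
    · exact hB l (hi ▸ hl) x hx
    · exact hA i hi l hl x hx
  · intro a b ha hb
    rw [add_lie]
    exact add_mem ha hb
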